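/- arXiv:2202.13707 — 7 statements merged into one kernel-verified Lean document; each statement's English description precedes it below -/
import Mathlib

section
/- Let A be a symmetric positive definite n×n real matrix and B an m×n real matrix. Then for every vector λ ∈ ℝ^m, the norm of λ with respect to M₀ := B A⁻¹ Bᵀ satisfies ‖λ‖_{M₀} = sup over nonzero w ∈ ℝ^n of (Bw, λ)_{ℓ²} / ‖w‖_A, where ‖w‖_A := √(wᵀ A w) and ‖λ‖_{M₀} := √(λᵀ M₀ λ). -/
open Matrix

lemma dot_cs {k : ℕ} (x y : Fin k → ℝ) : (x ⬝ᵥ y)^2 ≤ (x ⬝ᵥ x) * (y ⬝ᵥ y) := by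
  simpa [dotProduct, sq] using Finset.sum_mul_sq_le_sq_mul_sq Finset.univ x y

lemma psd_cs {k : ℕ} {A : Matrix (Fin k) (Fin k) ℝ} (hA : A.PosSemidef) (x y : Fin k → ℝ) :
    (x ⬝ᵥ A *ᵥ y)^2 ≤ (x ⬝ᵥ A *ᵥ x) * (y ⬝ᵥ A *ᵥ y) := by
  obtain ⟨C, rfl⟩ : ∃ C : Matrix (Fin k) (Fin k) ℝ, A = Cᴴ * C := by
    open scoped MatrixOrder in
    obtain ⟨C, hC⟩ := CStarAlgebra.nonneg_iff_eq_star_mul_self.mp hA.nonneg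
    exact ⟨C, hC⟩
  have h : ∀ a b : Fin k → ℝ, a ⬝ᵥ (Cᴴ * C) *ᵥ b = (C *ᵥ a) ⬝ᵥ (C *ᵥ b) := by
    intro a b
    rw [← Matrix.mulVec_mulVec, Matrix.dotProduct_mulVec, ← Matrix.mulVec_transpose,
      Matrix.conjTranspose_eq_transpose_of_trivial, Matrix.transpose_transpose]
  rw [h, h, h]
  exact dot_cs _ _

theorem stmt0 {n m : ℕ} (A : Matrix (Fin n) (Fin n) ℝ) (B : Matrix (Fin m) (Fin n) ℝ)
    (hA : A.PosDef) (lam : Fin m → ℝ) :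
    Real.sqrt (lam ⬝ᵥ (B * A⁻¹ * Bᵀ) *ᵥ lam) =
      ⨆ w : {w : Fin n → ℝ // w ≠ 0},
        (B *ᵥ (w : Fin n → ℝ) ⬝ᵥ lam) / Real.sqrt ((w : Fin n → ℝ) ⬝ᵥ A *ᵥ (w : Fin n → ℝ)) := by
  set v : Fin n → ℝ := A⁻¹ *ᵥ (Bᵀ *ᵥ lam) with hvdef
  have hAv : A *ᵥ v = Bᵀ *ᵥ lam := by
    rw [hvdef, Matrix.mulVec_mulVec, Matrix.mul_nonsing_inv _ hA.det_pos.ne'.isUnit, Matrix.one_mulVec]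
  have hterm : ∀ w : Fin n → ℝ, B *ᵥ w ⬝ᵥ lam = w ⬝ᵥ A *ᵥ v := by
    intro w
    rw [hAv, dotProduct_comm, Matrix.dotProduct_mulVec, ← Matrix.mulVec_transpose,
      dotProduct_comm]
  have hLHS : lam ⬝ᵥ (B * A⁻¹ * Bᵀ) *ᵥ lam = v ⬝ᵥ A *ᵥ v := by
    rw [hAv, hvdef, ← Matrix.mulVec_mulVec, ← Matrix.mulVec_mulVec,
      Matrix.dotProduct_mulVec lam B, ← Matrix.mulVec_transpose, dotProduct_comm]
  rw [hLHS]
  -- positivity facts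
  have hpos : ∀ w : Fin n → ℝ, w ≠ 0 → 0 < w ⬝ᵥ A *ᵥ w := by
    intro w hw
    simpa using hA.dotProduct_mulVec_pos hw
  have hvnn : 0 ≤ v ⬝ᵥ A *ᵥ v := by simpa using hA.posSemidef.dotProduct_mulVec_nonneg v
  -- each term is bounded by √(vᵀAv)
  have hub : ∀ w : {w : Fin n → ℝ // w ≠ 0},
      (B *ᵥ (w : Fin n → ℝ) ⬝ᵥ lam) / Real.sqrt ((w : Fin n → ℝ) ⬝ᵥ A *ᵥ (w : Fin n → ℝ)) ≤
        Real.sqrt (v ⬝ᵥ A *ᵥ v) := by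
    rintro ⟨w, hw⟩
    have hw2 : 0 < w ⬝ᵥ A *ᵥ w := hpos w hw
    have hsq : (0:ℝ) < Real.sqrt (w ⬝ᵥ A *ᵥ w) := Real.sqrt_pos.mpr hw2
    rw [div_le_iff₀ hsq, hterm]
    calc w ⬝ᵥ A *ᵥ v ≤ Real.sqrt ((w ⬝ᵥ A *ᵥ v)^2) := by
          rw [Real.sqrt_sq_eq_abs]; exact le_abs_self _
      _ ≤ Real.sqrt ((w ⬝ᵥ A *ᵥ w) * (v ⬝ᵥ A *ᵥ v)) :=
          Real.sqrt_le_sqrt (psd_cs hA.posSemidef w v)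
      _ = Real.sqrt (v ⬝ᵥ A *ᵥ v) * Real.sqrt (w ⬝ᵥ A *ᵥ w) := by
          rw [Real.sqrt_mul hw2.le, mul_comm]
  have hbdd : BddAbove (Set.range fun w : {w : Fin n → ℝ // w ≠ 0} =>
      (B *ᵥ (w : Fin n → ℝ) ⬝ᵥ lam) / Real.sqrt ((w : Fin n → ℝ) ⬝ᵥ A *ᵥ (w : Fin n → ℝ))) := by
    exact ⟨Real.sqrt (v ⬝ᵥ A *ᵥ v), by rintro x ⟨w, rfl⟩; exact hub w⟩
  rcases isEmpty_or_nonempty {w : Fin n → ℝ // w ≠ 0} with he | hne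
  · -- empty index: n = 0, so v ⬝ᵥ A *ᵥ v = 0
    have hn : ∀ w : Fin n → ℝ, w = 0 := fun w => by
      by_contra hw; exact he.elim ⟨w, hw⟩
    rw [Real.iSup_of_isEmpty, hn v]
    simp
  · refine le_antisymm ?_ (ciSup_le hub)
    by_cases hv : v = 0
    · obtain ⟨w⟩ := hne
      have : (0:ℝ) ≤ (B *ᵥ (w : Fin n → ℝ) ⬝ᵥ lam) /
          Real.sqrt ((w : Fin n → ℝ) ⬝ᵥ A *ᵥ (w : Fin n → ℝ)) := by
        rw [hterm, hv]
        simp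
      calc Real.sqrt (v ⬝ᵥ A *ᵥ v) = 0 := by rw [hv]; simp
        _ ≤ _ := le_trans this (le_ciSup hbdd w)
    · have hv2 : 0 < v ⬝ᵥ A *ᵥ v := hpos v hv
      have : Real.sqrt (v ⬝ᵥ A *ᵥ v) = (B *ᵥ v ⬝ᵥ lam) / Real.sqrt (v ⬝ᵥ A *ᵥ v) := by
        rw [hterm, eq_div_iff (Real.sqrt_pos.mpr hv2).ne', Real.mul_self_sqrt hv2.le]
      rw [this]
      exact le_ciSup hbdd ⟨v, hv⟩
end

section
/- Let A ∈ ℝ^{n×n} be symmetric positive definite, B ∈ ℝ^{m₁×n}, and C ∈ ℝ^{m₂×n} such that the block matrix K := [[A, Cᵀ],[C, 0]] is invertible. Define M₁ := [B 0] K⁻¹ [Bᵀ; 0] and W₁ := {w ∈ ℝ^n : Cw = 0}. Then for all λ ∈ ℝ^{m₁}, √(λᵀ M₁ λ) = sup over nonzero w ∈ W₁ of (Bw, λ)_{ℓ²} / √(wᵀ A w). -/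
open Matrix

theorem stmt1 {n m1 m2 : ℕ} (A : Matrix (Fin n) (Fin n) ℝ)
    (B : Matrix (Fin m1) (Fin n) ℝ) (C : Matrix (Fin m2) (Fin n) ℝ)
    (hA : A.PosDef)
    (hK : IsUnit (Matrix.fromBlocks A Cᵀ C (0 : Matrix (Fin m2) (Fin m2) ℝ)).det)
    (lam : Fin m1 → ℝ) :
    Real.sqrt (lam ⬝ᵥ
        ((Matrix.of fun i => Sum.elim (B i) (0 : Fin m2 → ℝ)) *
          (Matrix.fromBlocks A Cᵀ C (0 : Matrix (Fin m2) (Fin m2) ℝ))⁻¹ *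
          (Matrix.of fun i => Sum.elim (B i) (0 : Fin m2 → ℝ))ᵀ) *ᵥ lam) =
      ⨆ w : {w : Fin n → ℝ // C *ᵥ w = 0 ∧ w ≠ 0},
        (B *ᵥ (w : Fin n → ℝ) ⬝ᵥ lam) /
          Real.sqrt ((w : Fin n → ℝ) ⬝ᵥ A *ᵥ (w : Fin n → ℝ)) := by
  set K := Matrix.fromBlocks A Cᵀ C (0 : Matrix (Fin m2) (Fin m2) ℝ) with hKdef
  set E : Matrix (Fin m1) (Fin n ⊕ Fin m2) ℝ :=
    Matrix.of fun i => Sum.elim (B i) (0 : Fin m2 → ℝ) with hEdef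
  -- symmetry of the A-form
  have hAT : Aᵀ = A := hA.isHermitian.eq
  have hsym : ∀ x y : Fin n → ℝ, x ⬝ᵥ A *ᵥ y = y ⬝ᵥ A *ᵥ x := by
    intro x y
    rw [Matrix.dotProduct_mulVec, ← Matrix.mulVec_transpose, hAT, dotProduct_comm]
  -- the saddle point solution
  set s : Fin n ⊕ Fin m2 → ℝ := K⁻¹ *ᵥ Sum.elim (Bᵀ *ᵥ lam) 0 with hsdef
  set u : Fin n → ℝ := s ∘ Sum.inl with hudef
  set p : Fin m2 → ℝ := s ∘ Sum.inr with hpdef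
  have hKs : K *ᵥ s = Sum.elim (Bᵀ *ᵥ lam) 0 := by
    rw [hsdef, Matrix.mulVec_mulVec, Matrix.mul_nonsing_inv _ hK, Matrix.one_mulVec]
  have hKs' : K *ᵥ s = Sum.elim (A *ᵥ u + Cᵀ *ᵥ p) (C *ᵥ u) := by
    rw [hKdef, Matrix.fromBlocks_mulVec]
    simp [Sum.elim_comp_inl_inr, hudef, hpdef]
  have h1 : A *ᵥ u + Cᵀ *ᵥ p = Bᵀ *ᵥ lam := by
    have := congrArg (fun f => f ∘ Sum.inl) (hKs'.symm.trans hKs)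
    simpa using this
  have h2 : C *ᵥ u = 0 := by
    have := congrArg (fun f => f ∘ Sum.inr) (hKs'.symm.trans hKs)
    simpa using this
  -- Eᵀ *ᵥ lam
  have hEt : Eᵀ *ᵥ lam = Sum.elim (Bᵀ *ᵥ lam) 0 := by
    funext j
    cases j with
    | inl j => simp [Matrix.mulVec, dotProduct, hEdef]
    | inr j => simp [Matrix.mulVec, dotProduct, hEdef]
  -- E *ᵥ s = B *ᵥ u
  have hEs : E *ᵥ s = B *ᵥ u := by
    funext i
    simp [Matrix.mulVec, dotProduct, hEdef, Fintype.sum_sum_type, hudef]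
  -- the quadratic form value
  have hLHS : lam ⬝ᵥ (E * K⁻¹ * Eᵀ) *ᵥ lam = u ⬝ᵥ A *ᵥ u := by
    have : (E * K⁻¹ * Eᵀ) *ᵥ lam = E *ᵥ (K⁻¹ *ᵥ (Eᵀ *ᵥ lam)) := by
      rw [Matrix.mulVec_mulVec, Matrix.mulVec_mulVec]
    rw [this, hEt, ← hsdef, hEs]
    have : lam ⬝ᵥ B *ᵥ u = (Bᵀ *ᵥ lam) ⬝ᵥ u := by
      rw [Matrix.dotProduct_mulVec, Matrix.mulVec_transpose]
    rw [this, ← h1, add_dotProduct]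
    have hC0 : (Cᵀ *ᵥ p) ⬝ᵥ u = 0 := by
      rw [Matrix.mulVec_transpose, ← Matrix.dotProduct_mulVec, h2, dotProduct_zero]
    rw [hC0, add_zero, dotProduct_comm]
  -- numerator identity for w in the kernel
  have hnum : ∀ w : Fin n → ℝ, C *ᵥ w = 0 → B *ᵥ w ⬝ᵥ lam = w ⬝ᵥ A *ᵥ u := by
    intro w hw
    have : B *ᵥ w ⬝ᵥ lam = (Bᵀ *ᵥ lam) ⬝ᵥ w := by
      rw [dotProduct_comm, Matrix.dotProduct_mulVec, Matrix.mulVec_transpose]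
    rw [this, ← h1, add_dotProduct]
    have hC0 : (Cᵀ *ᵥ p) ⬝ᵥ w = 0 := by
      rw [Matrix.mulVec_transpose, ← Matrix.dotProduct_mulVec, hw, dotProduct_zero]
    rw [hC0, add_zero, dotProduct_comm, hsym]
  -- Cauchy–Schwarz
  have hCS : ∀ w : Fin n → ℝ, (w ⬝ᵥ A *ᵥ u) ^ 2 ≤ (w ⬝ᵥ A *ᵥ w) * (u ⬝ᵥ A *ᵥ u) := by
    intro w
    have hquad : ∀ t : ℝ, 0 ≤ (u ⬝ᵥ A *ᵥ u) * (t * t) + (2 * (w ⬝ᵥ A *ᵥ u)) * t +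
        (w ⬝ᵥ A *ᵥ w) := by
      intro t
      have h0 := hA.posSemidef.dotProduct_mulVec_nonneg (t • u + w)
      rw [star_trivial] at h0
      have hexp : (t • u + w) ⬝ᵥ A *ᵥ (t • u + w) =
          (u ⬝ᵥ A *ᵥ u) * (t * t) + (2 * (w ⬝ᵥ A *ᵥ u)) * t + (w ⬝ᵥ A *ᵥ w) := by
        simp only [Matrix.mulVec_add, Matrix.mulVec_smul, dotProduct_add,
          add_dotProduct, dotProduct_smul, smul_dotProduct, smul_eq_mul, hsym u w]
        ring
      rw [hexp] at h0
      exact h0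
    have := discrim_le_zero hquad
    rw [discrim] at this
    nlinarith [this]
  have hAu : 0 ≤ u ⬝ᵥ A *ᵥ u := by have h := hA.posSemidef.dotProduct_mulVec_nonneg u; rwa [star_trivial] at h
  set α := Real.sqrt (u ⬝ᵥ A *ᵥ u) with halpha
  -- each ratio is ≤ α
  have hbound : ∀ w : {w : Fin n → ℝ // C *ᵥ w = 0 ∧ w ≠ 0},
      (B *ᵥ (w : Fin n → ℝ) ⬝ᵥ lam) /
        Real.sqrt ((w : Fin n → ℝ) ⬝ᵥ A *ᵥ (w : Fin n → ℝ)) ≤ α := by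
    rintro ⟨w, hw, hw0⟩
    have hwpos : 0 < w ⬝ᵥ A *ᵥ w := by have h := hA.dotProduct_mulVec_pos hw0; rwa [star_trivial] at h
    have hs : 0 < Real.sqrt (w ⬝ᵥ A *ᵥ w) := Real.sqrt_pos.mpr hwpos
    rw [hnum w hw, div_le_iff₀ hs]
    calc w ⬝ᵥ A *ᵥ u ≤ |w ⬝ᵥ A *ᵥ u| := le_abs_self _
      _ = Real.sqrt ((w ⬝ᵥ A *ᵥ u) ^ 2) := (Real.sqrt_sq_eq_abs _).symm
      _ ≤ Real.sqrt ((w ⬝ᵥ A *ᵥ w) * (u ⬝ᵥ A *ᵥ u)) := Real.sqrt_le_sqrt (hCS w)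
      _ = Real.sqrt (w ⬝ᵥ A *ᵥ w) * α :=
          Real.sqrt_mul hwpos.le _
      _ = α * Real.sqrt (w ⬝ᵥ A *ᵥ w) := mul_comm _ _
  rw [hLHS, ← halpha]
  by_cases hu : u = 0
  · have hα0 : α = 0 := by rw [halpha, hu]; simp
    have hzero : ∀ w : {w : Fin n → ℝ // C *ᵥ w = 0 ∧ w ≠ 0},
        (B *ᵥ (w : Fin n → ℝ) ⬝ᵥ lam) /
          Real.sqrt ((w : Fin n → ℝ) ⬝ᵥ A *ᵥ (w : Fin n → ℝ)) = 0 := by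
      rintro ⟨w, hw, hw0⟩
      rw [hnum w hw, hu]
      simp
    rw [hα0]
    rcases isEmpty_or_nonempty {w : Fin n → ℝ // C *ᵥ w = 0 ∧ w ≠ 0} with h | h
    · rw [Real.iSup_of_isEmpty]
    · rw [show (fun w : {w : Fin n → ℝ // C *ᵥ w = 0 ∧ w ≠ 0} =>
          (B *ᵥ (w : Fin n → ℝ) ⬝ᵥ lam) /
            Real.sqrt ((w : Fin n → ℝ) ⬝ᵥ A *ᵥ (w : Fin n → ℝ))) = fun _ => (0:ℝ)
          from funext hzero, ciSup_const]
  · have hne : Nonempty {w : Fin n → ℝ // C *ᵥ w = 0 ∧ w ≠ 0} := ⟨⟨u, h2, hu⟩⟩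
    have hbdd : BddAbove (Set.range fun w : {w : Fin n → ℝ // C *ᵥ w = 0 ∧ w ≠ 0} =>
        (B *ᵥ (w : Fin n → ℝ) ⬝ᵥ lam) /
          Real.sqrt ((w : Fin n → ℝ) ⬝ᵥ A *ᵥ (w : Fin n → ℝ))) := by
      refine ⟨α, ?_⟩
      rintro x ⟨w, rfl⟩
      exact hbound w
    refine le_antisymm ?_ (ciSup_le hbound)
    have hval : (B *ᵥ (u : Fin n → ℝ) ⬝ᵥ lam) / Real.sqrt (u ⬝ᵥ A *ᵥ u) = α := by
      rw [hnum u h2, halpha, Real.div_sqrt]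
    calc α = (B *ᵥ (u : Fin n → ℝ) ⬝ᵥ lam) / Real.sqrt (u ⬝ᵥ A *ᵥ u) := hval.symm
      _ ≤ _ := le_ciSup hbdd (⟨u, h2, hu⟩ : {w : Fin n → ℝ // C *ᵥ w = 0 ∧ w ≠ 0})
end

section
/- Let A ∈ ℝ^{n×n} be symmetric positive definite, B ∈ ℝ^{m₁×n}, C ∈ ℝ^{m₂×n}, D ∈ ℝ^{m₃×m₂}, such that the block matrix K := [[A, Cᵀ, 0],[C, 0, Dᵀ],[0, D, 0]] is invertible. Define M₂ := [B 0 0] K⁻¹ [Bᵀ; 0; 0] and W₂ := {w ∈ ℝ^n : for all μ ∈ ℝ^{m₂}, Dμ = 0 implies μᵀ C w = 0}. Then for all λ ∈ ℝ^{m₁}, √(λᵀ M₂ λ) = sup over nonzero w ∈ W₂ of (Bw, λ)_{ℓ²} / √(wᵀ A w). -/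
open Matrix

lemma posdef_symm_dot {n : ℕ} {A : Matrix (Fin n) (Fin n) ℝ} (hA : A.PosDef)
    (a b : Fin n → ℝ) : a ⬝ᵥ A *ᵥ b = b ⬝ᵥ A *ᵥ a := by
  have hAt : Aᵀ = A := hA.isHermitian
  rw [dotProduct_mulVec, ← mulVec_transpose, hAt, dotProduct_comm]

lemma posdef_cauchy_schwarz {n : ℕ} {A : Matrix (Fin n) (Fin n) ℝ} (hA : A.PosDef)
    (x w : Fin n → ℝ) :
    (x ⬝ᵥ A *ᵥ w) ^ 2 ≤ (x ⬝ᵥ A *ᵥ x) * (w ⬝ᵥ A *ᵥ w) := by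
  have h : ∀ t : ℝ, 0 ≤ (w ⬝ᵥ A *ᵥ w) * (t * t) + (2 * (x ⬝ᵥ A *ᵥ w)) * t
      + x ⬝ᵥ A *ᵥ x := by
    intro t
    have h1 : (x + t • w) ⬝ᵥ A *ᵥ (x + t • w)
        = (w ⬝ᵥ A *ᵥ w) * (t * t) + (2 * (x ⬝ᵥ A *ᵥ w)) * t + x ⬝ᵥ A *ᵥ x := by
      simp only [mulVec_add, mulVec_smul, dotProduct_add, add_dotProduct,
        smul_dotProduct, dotProduct_smul, smul_eq_mul]
      rw [posdef_symm_dot hA w x]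
      ring
    calc (0:ℝ) ≤ (x + t • w) ⬝ᵥ A *ᵥ (x + t • w) := by
          simpa using hA.posSemidef.dotProduct_mulVec_nonneg (x + t • w)
      _ = _ := h1
  have hd := discrim_le_zero h
  rw [discrim] at hd
  nlinarith [hd]

theorem stmt2 {n m1 m2 m3 : ℕ} (A : Matrix (Fin n) (Fin n) ℝ)
    (B : Matrix (Fin m1) (Fin n) ℝ) (C : Matrix (Fin m2) (Fin n) ℝ)
    (D : Matrix (Fin m3) (Fin m2) ℝ)
    (hA : A.PosDef)
    (hK : IsUnit (Matrix.fromBlocks A (Matrix.fromCols Cᵀ (0 : Matrix (Fin n) (Fin m3) ℝ))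
        (Matrix.fromRows C (0 : Matrix (Fin m3) (Fin n) ℝ))
        (Matrix.fromBlocks (0 : Matrix (Fin m2) (Fin m2) ℝ) Dᵀ D
          (0 : Matrix (Fin m3) (Fin m3) ℝ))).det)
    (lam : Fin m1 → ℝ) :
    Real.sqrt (lam ⬝ᵥ
        ((Matrix.of fun i => Sum.elim (B i) (0 : Fin m2 ⊕ Fin m3 → ℝ)) *
          (Matrix.fromBlocks A (Matrix.fromCols Cᵀ (0 : Matrix (Fin n) (Fin m3) ℝ))
            (Matrix.fromRows C (0 : Matrix (Fin m3) (Fin n) ℝ))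
            (Matrix.fromBlocks (0 : Matrix (Fin m2) (Fin m2) ℝ) Dᵀ D
              (0 : Matrix (Fin m3) (Fin m3) ℝ)))⁻¹ *
          (Matrix.of fun i => Sum.elim (B i) (0 : Fin m2 ⊕ Fin m3 → ℝ))ᵀ) *ᵥ lam) =
      ⨆ w : {w : Fin n → ℝ //
          (∀ μ : Fin m2 → ℝ, D *ᵥ μ = 0 → μ ⬝ᵥ C *ᵥ w = 0) ∧ w ≠ 0},
        (B *ᵥ (w : Fin n → ℝ) ⬝ᵥ lam) /
          Real.sqrt ((w : Fin n → ℝ) ⬝ᵥ A *ᵥ (w : Fin n → ℝ)) := by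
  set E : Matrix (Fin m1) (Fin n ⊕ (Fin m2 ⊕ Fin m3)) ℝ :=
    Matrix.of fun i => Sum.elim (B i) (0 : Fin m2 ⊕ Fin m3 → ℝ) with hE
  set K : Matrix (Fin n ⊕ (Fin m2 ⊕ Fin m3)) (Fin n ⊕ (Fin m2 ⊕ Fin m3)) ℝ :=
    Matrix.fromBlocks A (Matrix.fromCols Cᵀ (0 : Matrix (Fin n) (Fin m3) ℝ))
      (Matrix.fromRows C (0 : Matrix (Fin m3) (Fin n) ℝ))
      (Matrix.fromBlocks (0 : Matrix (Fin m2) (Fin m2) ℝ) Dᵀ D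
        (0 : Matrix (Fin m3) (Fin m3) ℝ)) with hKdef
  set u : (Fin n ⊕ (Fin m2 ⊕ Fin m3)) → ℝ := K⁻¹ *ᵥ (Sum.elim (Bᵀ *ᵥ lam) 0) with hudef
  set x : Fin n → ℝ := u ∘ Sum.inl with hx
  set μ : Fin m2 → ℝ := u ∘ Sum.inr ∘ Sum.inl with hμ
  set ν : Fin m3 → ℝ := u ∘ Sum.inr ∘ Sum.inr with hν
  have hu : K *ᵥ u = Sum.elim (Bᵀ *ᵥ lam) 0 := by
    rw [hudef, mulVec_mulVec, mul_nonsing_inv _ hK, one_mulVec]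
  have hsplit : u ∘ Sum.inr = Sum.elim μ ν := funext fun j => by cases j <;> rfl
  rw [hKdef, fromBlocks_mulVec, hsplit] at hu
  have hinl : u ∘ Sum.inl = x := rfl
  rw [hinl, fromCols_mulVec_sumElim, fromRows_mulVec, fromBlocks_mulVec,
    Sum.elim_comp_inl, Sum.elim_comp_inr] at hu
  simp only [zero_mulVec, add_zero, zero_add] at hu
  have h1 : A *ᵥ x + Cᵀ *ᵥ μ = Bᵀ *ᵥ lam := funext fun a => by
    simpa using congrFun hu (Sum.inl a)
  have h2 : C *ᵥ x + Dᵀ *ᵥ ν = 0 := funext fun a => by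
    simpa using congrFun hu (Sum.inr (Sum.inl a))
  have h3 : D *ᵥ μ = 0 := funext fun a => by
    simpa using congrFun hu (Sum.inr (Sum.inr a))
  have hCx : C *ᵥ x = -(Dᵀ *ᵥ ν) := eq_neg_of_add_eq_zero_left h2
  -- x belongs to W₂
  have hxW : ∀ μ' : Fin m2 → ℝ, D *ᵥ μ' = 0 → μ' ⬝ᵥ C *ᵥ x = 0 := by
    intro μ' hμ'
    rw [hCx, dotProduct_neg, dotProduct_mulVec, vecMul_transpose, hμ', zero_dotProduct,
      neg_zero]
  -- key identity
  have key : ∀ w : Fin n → ℝ, (∀ μ' : Fin m2 → ℝ, D *ᵥ μ' = 0 → μ' ⬝ᵥ C *ᵥ w = 0) →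
      B *ᵥ w ⬝ᵥ lam = x ⬝ᵥ A *ᵥ w := by
    intro w hw
    have : B *ᵥ w ⬝ᵥ lam = (Bᵀ *ᵥ lam) ⬝ᵥ w := by
      rw [mulVec_transpose, ← dotProduct_mulVec, dotProduct_comm]
    rw [this, ← h1, add_dotProduct]
    have hc : (Cᵀ *ᵥ μ) ⬝ᵥ w = μ ⬝ᵥ C *ᵥ w := by
      rw [mulVec_transpose, ← dotProduct_mulVec]
    rw [hc, hw μ h3]
    have : (A *ᵥ x) ⬝ᵥ w = x ⬝ᵥ A *ᵥ w := by
      rw [dotProduct_comm, posdef_symm_dot hA w x]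
    rw [this, add_zero]
  -- LHS equals √(x ⬝ᵥ A *ᵥ x)
  have hEt : Eᵀ *ᵥ lam = Sum.elim (Bᵀ *ᵥ lam) 0 := by
    funext j
    cases j <;> simp [hE, mulVec, dotProduct, transpose_apply]
  have hEu : E *ᵥ u = B *ᵥ x := by
    funext i
    simp [hE, mulVec, dotProduct, Fintype.sum_sum_type, hx]
  have hLHS : lam ⬝ᵥ (E * K⁻¹ * Eᵀ) *ᵥ lam = x ⬝ᵥ A *ᵥ x := by
    rw [← mulVec_mulVec, ← mulVec_mulVec, hEt, ← hudef, hEu]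
    rw [dotProduct_comm]
    exact key x hxW
  rw [hLHS]
  -- now prove √(x⬝ᵥAx) = iSup
  have hterm : ∀ w : {w : Fin n → ℝ //
      (∀ μ : Fin m2 → ℝ, D *ᵥ μ = 0 → μ ⬝ᵥ C *ᵥ w = 0) ∧ w ≠ 0},
      B *ᵥ (w : Fin n → ℝ) ⬝ᵥ lam = x ⬝ᵥ A *ᵥ (w : Fin n → ℝ) :=
    fun w => key w w.2.1
  have hbnd : ∀ w : {w : Fin n → ℝ //
      (∀ μ : Fin m2 → ℝ, D *ᵥ μ = 0 → μ ⬝ᵥ C *ᵥ w = 0) ∧ w ≠ 0},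
      B *ᵥ (w : Fin n → ℝ) ⬝ᵥ lam / Real.sqrt ((w : Fin n → ℝ) ⬝ᵥ A *ᵥ (w : Fin n → ℝ))
        ≤ Real.sqrt (x ⬝ᵥ A *ᵥ x) := by
    intro w
    have hwpos : 0 < (w : Fin n → ℝ) ⬝ᵥ A *ᵥ (w : Fin n → ℝ) := by
      simpa using hA.dotProduct_mulVec_pos w.2.2
    rw [hterm w, div_le_iff₀ (Real.sqrt_pos.mpr hwpos), ← Real.sqrt_mul
      (by simpa using hA.posSemidef.dotProduct_mulVec_nonneg x : (0:ℝ) ≤ x ⬝ᵥ A *ᵥ x)]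
    calc x ⬝ᵥ A *ᵥ (w : Fin n → ℝ)
        ≤ Real.sqrt ((x ⬝ᵥ A *ᵥ (w : Fin n → ℝ)) ^ 2) := by
          rw [Real.sqrt_sq_eq_abs]; exact le_abs_self _
      _ ≤ _ := Real.sqrt_le_sqrt (posdef_cauchy_schwarz hA x (w : Fin n → ℝ))
  by_cases hx0 : x = 0
  · have hz : ∀ w : {w : Fin n → ℝ //
        (∀ μ : Fin m2 → ℝ, D *ᵥ μ = 0 → μ ⬝ᵥ C *ᵥ w = 0) ∧ w ≠ 0},
        B *ᵥ (w : Fin n → ℝ) ⬝ᵥ lam / Real.sqrt ((w : Fin n → ℝ) ⬝ᵥ A *ᵥ (w : Fin n → ℝ))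
          = 0 := by
      intro w
      rw [hterm w, hx0]
      simp
    rw [hx0]
    simp only [zero_dotProduct, Real.sqrt_zero]
    rw [iSup_congr hz]
    rcases isEmpty_or_nonempty {w : Fin n → ℝ //
        (∀ μ : Fin m2 → ℝ, D *ᵥ μ = 0 → μ ⬝ᵥ C *ᵥ w = 0) ∧ w ≠ 0} with h | h
    · exact (Real.iSup_of_isEmpty _).symm
    · exact (ciSup_const).symm
  · have hne : Nonempty {w : Fin n → ℝ //
        (∀ μ : Fin m2 → ℝ, D *ᵥ μ = 0 → μ ⬝ᵥ C *ᵥ w = 0) ∧ w ≠ 0} := ⟨⟨x, hxW, hx0⟩⟩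
    apply le_antisymm
    · refine le_ciSup_of_le ⟨Real.sqrt (x ⬝ᵥ A *ᵥ x), ?_⟩ ⟨x, hxW, hx0⟩ ?_
      · rintro y ⟨w, rfl⟩
        exact hbnd w
      · rw [hterm ⟨x, hxW, hx0⟩]
        exact (Real.div_sqrt).ge
    · exact ciSup_le hbnd
end

section
/- Let V and Q be real normed vector spaces and b : V × Q → ℝ bilinear with |b(u,p)| ≤ δ ‖u‖_V ‖p‖_Q for all u, p. Suppose Q = Q₀ ⊕ Q₁ and there exist constants β̂ > 0 and β₁ > 0 with β̂, β₁ ≤ δ such that: (i) for every p₀ ∈ Q₀, sup over nonzero u ∈ V of b(u, p₀)/‖u‖_V ≥ β̂ ‖p₀‖_Q, and moreover the supremum in (i) can be attained by elements u with b(u, p₁) = 0 for all p₁ ∈ Q₁; (ii) for every p₁ ∈ Q₁, sup over nonzero u ∈ V of b(u, p₁)/‖u‖_V ≥ β₁ ‖p₁‖_Q. Then for every p = p₀ + p₁ with p₀ ∈ Q₀, p₁ ∈ Q₁ and ‖p₀ + p₁‖_Q ≤ ‖p₀‖_Q + ‖p₁‖_Q, one has sup over nonzero u ∈ V of b(u,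 p)/‖u‖_V ≥ (β₁ β̂)/(δ + β₁ + β̂) ‖p‖_Q. -/
theorem stmt4 {V Q : Type*} [NormedAddCommGroup V] [NormedSpace ℝ V]
    [NormedAddCommGroup Q] [NormedSpace ℝ Q]
    (b : V →ₗ[ℝ] Q →ₗ[ℝ] ℝ) (δ : ℝ)
    (hbdd : ∀ (u : V) (p : Q), |b u p| ≤ δ * ‖u‖ * ‖p‖)
    (Q0 Q1 : Submodule ℝ Q) (hcompl : IsCompl Q0 Q1)
    (βhat β1 : ℝ) (hβhat : 0 < βhat) (hβ1 : 0 < β1)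
    (hβhatδ : βhat ≤ δ) (hβ1δ : β1 ≤ δ)
    (hQ0 : ∀ p0 ∈ Q0, ∃ u : V, u ≠ 0 ∧ b u p0 ≥ βhat * ‖u‖ * ‖p0‖ ∧
        ∀ p1 ∈ Q1, b u p1 = 0)
    (hQ1 : ∀ p1 ∈ Q1,
        (⨆ u : {u : V // u ≠ 0}, b (u : V) p1 / ‖(u : V)‖) ≥ β1 * ‖p1‖) :
    ∀ p0 ∈ Q0, ∀ p1 ∈ Q1, ‖p0 + p1‖ ≤ ‖p0‖ + ‖p1‖ →
      (⨆ u : {u : V // u ≠ 0}, b (u : V) (p0 + p1) / ‖(u : V)‖) ≥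
        (β1 * βhat) / (δ + β1 + βhat) * ‖p0 + p1‖ := by
  intro p0 hp0 p1 hp1 htri
  obtain ⟨u, hu, hbu, hann⟩ := hQ0 p0 hp0
  have hne : Nonempty {v : V // v ≠ 0} := ⟨⟨u, hu⟩⟩
  have hun : (0:ℝ) < ‖u‖ := norm_pos_iff.mpr hu
  set S := ⨆ v : {v : V // v ≠ 0}, b (v : V) (p0 + p1) / ‖(v : V)‖ with hSdef
  have hbound : ∀ v : {v : V // v ≠ 0},
      b (v : V) (p0 + p1) / ‖(v : V)‖ ≤ δ * ‖p0 + p1‖ := by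
    intro v
    have hv : (0:ℝ) < ‖(v : V)‖ := norm_pos_iff.mpr v.2
    rw [div_le_iff₀ hv]
    calc b (v : V) (p0 + p1) ≤ |b (v : V) (p0 + p1)| := le_abs_self _
      _ ≤ δ * ‖(v : V)‖ * ‖p0 + p1‖ := hbdd _ _
      _ = δ * ‖p0 + p1‖ * ‖(v : V)‖ := by ring
  have hbdd_above : BddAbove (Set.range fun v : {v : V // v ≠ 0} =>
      b (v : V) (p0 + p1) / ‖(v : V)‖) := ⟨δ * ‖p0 + p1‖, by
    rintro x ⟨v, rfl⟩; exact hbound v⟩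
  -- Step 1: S ≥ βhat * ‖p0‖
  have h1 : βhat * ‖p0‖ ≤ S := by
    have hle : βhat * ‖p0‖ ≤ b u (p0 + p1) / ‖u‖ := by
      rw [map_add, hann p1 hp1, add_zero, le_div_iff₀ hun]
      calc βhat * ‖p0‖ * ‖u‖ = βhat * ‖u‖ * ‖p0‖ := by ring
        _ ≤ b u p0 := hbu
    exact hle.trans (le_ciSup hbdd_above ⟨u, hu⟩)
  -- Step 2: β1 * ‖p1‖ ≤ S + δ * ‖p0‖
  have h2 : β1 * ‖p1‖ ≤ S + δ * ‖p0‖ := by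
    refine (hQ1 p1 hp1).trans (ciSup_le ?_)
    intro v
    have hv : (0:ℝ) < ‖(v : V)‖ := norm_pos_iff.mpr v.2
    have hsplit : b (v : V) p1 / ‖(v : V)‖ =
        b (v : V) (p0 + p1) / ‖(v : V)‖ - b (v : V) p0 / ‖(v : V)‖ := by
      rw [map_add]; ring
    rw [hsplit]
    have hA : b (v : V) (p0 + p1) / ‖(v : V)‖ ≤ S := le_ciSup hbdd_above v
    have hB : -(δ * ‖p0‖) ≤ b (v : V) p0 / ‖(v : V)‖ := by
      rw [le_div_iff₀ hv]
      have := (abs_le.mp (hbdd (v : V) p0)).1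
      nlinarith [this]
    linarith
  have hden : (0:ℝ) < δ + β1 + βhat := by linarith
  have hp0n : (0:ℝ) ≤ ‖p0‖ := norm_nonneg _
  have hp1n : (0:ℝ) ≤ ‖p1‖ := norm_nonneg _
  rw [ge_iff_le, div_mul_eq_mul_div, div_le_iff₀ hden]
  nlinarith [mul_le_mul_of_nonneg_left h1 (le_of_lt hβ1),
    mul_le_mul_of_nonneg_left h2 (le_of_lt hβhat),
    mul_le_mul_of_nonneg_left htri (mul_pos hβ1 hβhat).le,
    mul_le_mul_of_nonneg_left h1 (by linarith : (0:ℝ) ≤ δ)]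
end

section
/- Let K_{II} be symmetric positive definite, D_I, D_Γ, C_A matrices with D_Iᵀ𝟙 = 0, C_A𝟙 = 1 (where 𝟙 is the all-ones vector of appropriate size), and set W := D_I K_{II}⁻¹ D_Iᵀ + C_Aᵀ C_A. Assume W is invertible. Then the inverse of the block matrix [[K_{II}, D_Iᵀ, 0],[D_I, 0, C_Aᵀ],[0, C_A, 0]] is [[K_{II}⁻¹ − K_{II}⁻¹D_IᵀW⁻¹D_IK_{II}⁻¹, K_{II}⁻¹D_IᵀW⁻¹, 0],[W⁻¹D_IK_{II}⁻¹, 𝟙𝟙ᵀ − W⁻¹, 𝟙],[0, 𝟙ᵀ, 0]]. -/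
open Matrix

open Matrix in
lemma fromCols_add' {m n₁ n₂ : Type*} (A₁ : Matrix m n₁ ℝ) (A₂ : Matrix m n₂ ℝ)
    (B₁ : Matrix m n₁ ℝ) (B₂ : Matrix m n₂ ℝ) :
    fromCols A₁ A₂ + fromCols B₁ B₂ = fromCols (A₁ + B₁) (A₂ + B₂) := by
  ext i (j | j) <;> simp

open Matrix in
lemma fromRows_add' {m₁ m₂ n : Type*} (A₁ : Matrix m₁ n ℝ) (A₂ : Matrix m₂ n ℝ)
    (B₁ : Matrix m₁ n ℝ) (B₂ : Matrix m₂ n ℝ) :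
    fromRows A₁ A₂ + fromRows B₁ B₂ = fromRows (A₁ + B₁) (A₂ + B₂) := by
  ext (i | i) j <;> simp

theorem stmt8 {nI m : ℕ}
    (KII : Matrix (Fin nI) (Fin nI) ℝ) (DI : Matrix (Fin m) (Fin nI) ℝ)
    (CA : Matrix (Fin 1) (Fin m) ℝ)
    (hKII : KII.PosDef)
    (hDI : DIᵀ *ᵥ (fun _ => (1 : ℝ)) = 0)
    (hCA : CA *ᵥ (fun _ => (1 : ℝ)) = fun _ => (1 : ℝ))
    (hW : IsUnit (DI * KII⁻¹ * DIᵀ + CAᵀ * CA).det) :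
    (Matrix.fromBlocks KII (Matrix.fromCols DIᵀ (0 : Matrix (Fin nI) (Fin 1) ℝ))
        (Matrix.fromRows DI (0 : Matrix (Fin 1) (Fin nI) ℝ))
        (Matrix.fromBlocks (0 : Matrix (Fin m) (Fin m) ℝ) CAᵀ CA
          (0 : Matrix (Fin 1) (Fin 1) ℝ)))⁻¹ =
      Matrix.fromBlocks
        (KII⁻¹ - KII⁻¹ * DIᵀ * (DI * KII⁻¹ * DIᵀ + CAᵀ * CA)⁻¹ * DI * KII⁻¹)
        (Matrix.fromCols (KII⁻¹ * DIᵀ * (DI * KII⁻¹ * DIᵀ + CAᵀ * CA)⁻¹)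
          (0 : Matrix (Fin nI) (Fin 1) ℝ))
        (Matrix.fromRows ((DI * KII⁻¹ * DIᵀ + CAᵀ * CA)⁻¹ * DI * KII⁻¹)
          (0 : Matrix (Fin 1) (Fin nI) ℝ))
        (Matrix.fromBlocks
          ((Matrix.of fun _ _ => (1 : ℝ)) - (DI * KII⁻¹ * DIᵀ + CAᵀ * CA)⁻¹)
          (Matrix.of fun (_ : Fin m) (_ : Fin 1) => (1 : ℝ))
          (Matrix.of fun (_ : Fin 1) (_ : Fin m) => (1 : ℝ))
          (0 : Matrix (Fin 1) (Fin 1) ℝ)) := by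
  set W : Matrix (Fin m) (Fin m) ℝ := DI * KII⁻¹ * DIᵀ + CAᵀ * CA with hWdef
  have hKd : IsUnit KII.det := isUnit_iff_ne_zero.mpr hKII.det_pos.ne'
  have hK1 : KII * KII⁻¹ = 1 := Matrix.mul_nonsing_inv _ hKd
  have hW1 : W * W⁻¹ = 1 := Matrix.mul_nonsing_inv _ hW
  have hW1' : W⁻¹ * W = 1 := Matrix.nonsing_inv_mul _ hW
  -- symmetry facts
  have hKt : KIIᵀ = KII := by
    ext i j
    simpa using congrFun (congrFun hKII.isHermitian i) j
  have hKsym : KII⁻¹ᵀ = KII⁻¹ := by rw [Matrix.transpose_nonsing_inv, hKt]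
  have hWsym : Wᵀ = W := by
    rw [hWdef]
    simp [Matrix.transpose_add, Matrix.transpose_mul, hKsym, Matrix.mul_assoc]
  have hWisym : W⁻¹ᵀ = W⁻¹ := by rw [Matrix.transpose_nonsing_inv, hWsym]
  -- all-ones facts
  have hDJm : DIᵀ * (Matrix.of fun (_ : Fin m) (_ : Fin m) => (1 : ℝ)) = 0 := by
    ext i j
    simpa [Matrix.mul_apply, Matrix.mulVec, dotProduct] using congrFun hDI i
  have hDJ1 : DIᵀ * (Matrix.of fun (_ : Fin m) (_ : Fin 1) => (1 : ℝ)) = 0 := by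
    ext i j
    simpa [Matrix.mul_apply, Matrix.mulVec, dotProduct] using congrFun hDI i
  have hJ1D : (Matrix.of fun (_ : Fin 1) (_ : Fin m) => (1 : ℝ)) * DI = 0 := by
    ext i j
    simpa [Matrix.mul_apply, Matrix.mulVec, dotProduct, mul_comm] using congrFun hDI j
  have hCAJm : CA * (Matrix.of fun (_ : Fin m) (_ : Fin m) => (1 : ℝ)) =
      Matrix.of fun (_ : Fin 1) (_ : Fin m) => (1 : ℝ) := by
    ext i j
    simpa [Matrix.mul_apply, Matrix.mulVec, dotProduct] using congrFun hCA i
  have hCAJ1 : CA * (Matrix.of fun (_ : Fin m) (_ : Fin 1) => (1 : ℝ)) =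
      Matrix.of fun (_ : Fin 1) (_ : Fin 1) => (1 : ℝ) := by
    ext i j
    simpa [Matrix.mul_apply, Matrix.mulVec, dotProduct] using congrFun hCA i
  have hJ11 : (Matrix.of fun (_ : Fin 1) (_ : Fin 1) => (1 : ℝ)) = 1 := by
    ext i j
    fin_cases i; fin_cases j
    simp
  -- W * 𝟙 = CAᵀ
  have hWJ : W * (Matrix.of fun (_ : Fin m) (_ : Fin 1) => (1 : ℝ)) = CAᵀ := by
    rw [hWdef]
    simp only [Matrix.add_mul, Matrix.mul_assoc, hDJ1, hCAJ1, hJ11,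
      Matrix.mul_zero, Matrix.mul_one, zero_add]
  have hWiCA : W⁻¹ * CAᵀ = Matrix.of fun (_ : Fin m) (_ : Fin 1) => (1 : ℝ) := by
    rw [← hWJ, ← Matrix.mul_assoc, hW1', Matrix.one_mul]
  have hCAWi : CA * W⁻¹ = Matrix.of fun (_ : Fin 1) (_ : Fin m) => (1 : ℝ) := by
    have := congrArg Matrix.transpose hWiCA
    rw [Matrix.transpose_mul, hWisym, Matrix.transpose_transpose] at this
    rw [this]
    rfl
  have hCAWiDI : CA * W⁻¹ * DI = 0 := by rw [hCAWi, hJ1D]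
  have hCCWD : CAᵀ * CA * W⁻¹ * DI = 0 := by
    have h : CAᵀ * (CA * W⁻¹ * DI) = 0 := by rw [hCAWiDI, Matrix.mul_zero]
    simpa [Matrix.mul_assoc] using h
  have hDIE : DI * (KII⁻¹ - KII⁻¹ * DIᵀ * W⁻¹ * DI * KII⁻¹) = 0 := by
    have hAux : DI * KII⁻¹ * DIᵀ * W⁻¹ = 1 - CAᵀ * CA * W⁻¹ := by
      rw [eq_sub_iff_add_eq, ← Matrix.add_mul, ← hWdef, hW1]
    rw [Matrix.mul_sub]
    have hre : DI * (KII⁻¹ * DIᵀ * W⁻¹ * DI * KII⁻¹) =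
        DI * KII⁻¹ * DIᵀ * W⁻¹ * DI * KII⁻¹ := by
      simp only [Matrix.mul_assoc]
    rw [hre, hAux, Matrix.sub_mul, Matrix.sub_mul, Matrix.one_mul, hCCWD,
      Matrix.zero_mul, sub_zero, sub_self]
  apply Matrix.inv_eq_right_inv
  rw [Matrix.fromBlocks_multiply, Matrix.fromCols_mul_fromRows,
    Matrix.fromCols_mul_fromBlocks, Matrix.fromBlocks_mul_fromRows,
    Matrix.fromRows_mul, Matrix.mul_fromCols, Matrix.fromRows_mul_fromCols,
    Matrix.fromBlocks_multiply, fromCols_add', fromRows_add',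
    Matrix.fromBlocks_add, ← Matrix.fromBlocks_one, Matrix.fromBlocks_inj]
  refine ⟨?_, ?_, ?_, ?_⟩
  · -- top-left
    simp only [Matrix.mul_sub, ← Matrix.mul_assoc, hK1, Matrix.one_mul,
      Matrix.zero_mul, Matrix.mul_zero, add_zero]
    abel
  · -- top-right
    rw [← Matrix.fromCols_zero, Matrix.fromCols_ext_iff]
    constructor
    · simp only [Matrix.mul_sub, hDJm, ← Matrix.mul_assoc, hK1, Matrix.one_mul,
        Matrix.zero_mul, Matrix.mul_zero, add_zero, zero_sub]
      abel
    · simp [hDJ1]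
  · -- bottom-left
    rw [← Matrix.fromRows_zero, Matrix.fromRows_ext_iff]
    constructor
    · rw [hDIE]; simp
    · have h3 : CA * (W⁻¹ * DI * KII⁻¹) = 0 := by
        have h4 : CA * W⁻¹ * DI * KII⁻¹ = 0 := by rw [hCAWiDI, Matrix.zero_mul]
        simpa [Matrix.mul_assoc] using h4
      rw [h3]; simp
  · -- bottom-right
    rw [← Matrix.fromBlocks_one, Matrix.fromBlocks_inj]
    refine ⟨?_, ?_, ?_, ?_⟩
    · rw [Matrix.zero_mul, zero_add, ← hCAWi]
      simp only [← Matrix.mul_assoc]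
      rw [← Matrix.add_mul, ← hWdef, hW1]
    · simp
    · rw [Matrix.mul_sub, hCAJm, hCAWi]
      simp
    · rw [hCAJ1, hJ11]
      simp
end

section
/- Let B be a matrix and D a symmetric positive definite matrix satisfying B D⁻¹ Bᵀ B = B. Let M := B D⁻¹ S D⁻¹ Bᵀ be SPD on the range of B for an SPD matrix S, and suppose for some λ₁ in the range of the map w ↦ M B w (over w in a subspace W̃) and constants c > 0: ‖D⁻¹BᵀBw‖_S ≤ c ‖w‖_S for all w ∈ W̃ with D⁻¹BᵀBw ∈ W̃. Then √(λ₁ᵀ M⁻¹ λ₁) ≤ sup over w ∈ W̃ \ ker B of (BD⁻¹BᵀBw, λ₁)/‖D⁻¹BᵀBw‖_S. -/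
open Matrix

/-- Cauchy–Schwarz for the plain dot product on `Fin n → ℝ`. -/
lemma dot_cs_aux {n : ℕ} (x y : Fin n → ℝ) :
    x ⬝ᵥ y ≤ Real.sqrt (x ⬝ᵥ x) * Real.sqrt (y ⬝ᵥ y) := by
  have h := Finset.sum_mul_sq_le_sq_mul_sq Finset.univ x y
  have hx : x ⬝ᵥ x = ∑ i, x i ^ 2 := by simp [dotProduct, sq]
  have hy : y ⬝ᵥ y = ∑ i, y i ^ 2 := by simp [dotProduct, sq]
  have hxy : x ⬝ᵥ y = ∑ i, x i * y i := rfl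
  calc x ⬝ᵥ y ≤ |x ⬝ᵥ y| := le_abs_self _
    _ = Real.sqrt ((x ⬝ᵥ y) ^ 2) := (Real.sqrt_sq_eq_abs _).symm
    _ ≤ Real.sqrt ((x ⬝ᵥ x) * (y ⬝ᵥ y)) := by
        apply Real.sqrt_le_sqrt
        rw [hx, hy, hxy]; exact h
    _ = Real.sqrt (x ⬝ᵥ x) * Real.sqrt (y ⬝ᵥ y) := by
        rw [Real.sqrt_mul (by rw [hx]; positivity)]

open scoped MatrixOrder in
/-- Cauchy–Schwarz for the bilinear form of a positive semidefinite real matrix. -/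
lemma psd_cs_aux {n : ℕ} {S : Matrix (Fin n) (Fin n) ℝ} (hS : S.PosSemidef)
    (x y : Fin n → ℝ) :
    x ⬝ᵥ S *ᵥ y ≤ Real.sqrt (x ⬝ᵥ S *ᵥ x) * Real.sqrt (y ⬝ᵥ S *ᵥ y) := by
  set A := CFC.sqrt S with hA
  have hAH : Aᵀ = A := by
    have := (CFC.sqrt_nonneg S).posSemidef.isHermitian.eq
    rwa [conjTranspose_eq_transpose_of_trivial] at this
  have hsq : A * A = S := CFC.sqrt_mul_sqrt_self S hS.nonneg
  have key : ∀ u v : Fin n → ℝ, u ⬝ᵥ S *ᵥ v = (A *ᵥ u) ⬝ᵥ (A *ᵥ v) := by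
    intro u v
    rw [← hsq, ← mulVec_mulVec, dotProduct_mulVec, ← mulVec_transpose, hAH]
  rw [key, key, key]
  exact dot_cs_aux _ _

lemma expand_aux {m k : ℕ} (C : Matrix (Fin m) (Fin k) ℝ) (P : Matrix (Fin m) (Fin m) ℝ)
    (x y : Fin k → ℝ) :
    (C *ᵥ x) ⬝ᵥ (P *ᵥ (C *ᵥ y)) = x ⬝ᵥ ((Cᵀ * P * C) *ᵥ y) := by
  rw [mulVec_mulVec, dotProduct_mulVec, ← vecMul_transpose, vecMul_vecMul,
    ← dotProduct_mulVec, ← Matrix.mul_assoc]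

/-- A real `iSup` over a family admitting pointwise negations is nonnegative. -/
lemma real_iSup_nonneg_aux {ι : Sort*} (f : ι → ℝ) (h : ∀ i, ∃ j, f j = -f i) :
    0 ≤ ⨆ i, f i := by
  rcases isEmpty_or_nonempty ι with h0 | h0
  · rw [Real.iSup_of_isEmpty]
  · by_cases hb : BddAbove (Set.range f)
    · obtain ⟨i⟩ := h0
      obtain ⟨j, hj⟩ := h i
      rcases le_total 0 (f i) with h' | h'
      · exact h'.trans (le_ciSup hb i)
      · have : 0 ≤ f j := by rw [hj]; linarith
        exact this.trans (le_ciSup hb j)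
    · rw [Real.iSup_of_not_bddAbove hb]

theorem stmt15 {N n : ℕ}
    (B : Matrix (Fin N) (Fin n) ℝ) (D S : Matrix (Fin n) (Fin n) ℝ)
    (hD : D.PosDef) (hS : S.PosDef)
    (hBD : B * D⁻¹ * Bᵀ * B = B)
    (Wt : Submodule ℝ (Fin n → ℝ))
    (hMpos : ∀ μ : Fin N → ℝ, μ ∈ Set.range (B.mulVec) → μ ≠ 0 →
        0 < μ ⬝ᵥ (B * D⁻¹ * S * D⁻¹ * Bᵀ) *ᵥ μ)
    (c : ℝ) (hc : 0 < c)
    (hstab : ∀ w ∈ Wt, (D⁻¹ * Bᵀ * B) *ᵥ w ∈ Wt →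
        Real.sqrt (((D⁻¹ * Bᵀ * B) *ᵥ w) ⬝ᵥ S *ᵥ ((D⁻¹ * Bᵀ * B) *ᵥ w)) ≤
          c * Real.sqrt (w ⬝ᵥ S *ᵥ w))
    (lam1 : Fin N → ℝ)
    (hlam1 : ∃ w ∈ Wt, lam1 = (B * D⁻¹ * S * D⁻¹ * Bᵀ) *ᵥ (B *ᵥ w)) :
    Real.sqrt (lam1 ⬝ᵥ (B * D⁻¹ * S * D⁻¹ * Bᵀ)⁻¹ *ᵥ lam1) ≤
      ⨆ w : {w : Fin n → ℝ // w ∈ Wt ∧ B *ᵥ w ≠ 0},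
        ((B *ᵥ ((D⁻¹ * Bᵀ * B) *ᵥ (w : Fin n → ℝ))) ⬝ᵥ lam1) /
          Real.sqrt (((D⁻¹ * Bᵀ * B) *ᵥ (w : Fin n → ℝ)) ⬝ᵥ S *ᵥ
            ((D⁻¹ * Bᵀ * B) *ᵥ (w : Fin n → ℝ))) := by
  classical
  set M : Matrix (Fin N) (Fin N) ℝ := B * D⁻¹ * S * D⁻¹ * Bᵀ with hM
  set K : Matrix (Fin n) (Fin n) ℝ := D⁻¹ * Bᵀ * B with hK
  obtain ⟨w₀, hw₀W, hl⟩ := hlam1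
  -- basic matrix identities
  have hDD : Dᵀ = D := by
    have := hD.isHermitian.eq
    rwa [conjTranspose_eq_transpose_of_trivial] at this
  have hDsym : (D⁻¹)ᵀ = D⁻¹ := by rw [transpose_nonsing_inv, hDD]
  have hBK : B * K = B := by
    rw [hK, show B * (D⁻¹ * Bᵀ * B) = B * D⁻¹ * Bᵀ * B by
      simp only [Matrix.mul_assoc], hBD]
  have hBKv : ∀ x : Fin n → ℝ, B *ᵥ (K *ᵥ x) = B *ᵥ x := by
    intro x; rw [mulVec_mulVec, hBK]
  have hBtMB : Bᵀ * M * B = Kᵀ * S * K := by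
    rw [hM, hK]
    simp only [transpose_mul, transpose_transpose, hDsym]
    simp only [Matrix.mul_assoc]
  have hkey : ∀ x y : Fin n → ℝ,
      (B *ᵥ x) ⬝ᵥ M *ᵥ (B *ᵥ y) = (K *ᵥ x) ⬝ᵥ S *ᵥ (K *ᵥ y) := by
    intro x y
    rw [expand_aux, expand_aux, hBtMB]
  -- the sup function
  set f : {w : Fin n → ℝ // w ∈ Wt ∧ B *ᵥ w ≠ 0} → ℝ := fun w =>
      ((B *ᵥ (K *ᵥ (w : Fin n → ℝ))) ⬝ᵥ lam1) /
        Real.sqrt ((K *ᵥ (w : Fin n → ℝ)) ⬝ᵥ S *ᵥ (K *ᵥ (w : Fin n → ℝ))) with hf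
  have hneg : ∀ i, ∃ j, f j = -f i := by
    rintro ⟨w, hwW, hwB⟩
    refine ⟨⟨-w, neg_mem hwW, by rw [mulVec_neg]; exact neg_ne_zero.mpr hwB⟩, ?_⟩
    simp only [hf, mulVec_neg, dotProduct_neg, neg_dotProduct, neg_neg, neg_div]
  have hsupnn : 0 ≤ ⨆ i, f i := real_iSup_nonneg_aux f hneg
  by_cases hMu : IsUnit M.det
  case neg =>
    rw [nonsing_inv_apply_not_isUnit M hMu, zero_mulVec, dotProduct_zero, Real.sqrt_zero]
    exact hsupnn
  case pos =>
    by_cases hBw₀ : B *ᵥ w₀ = 0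
    · rw [hl, hBw₀, mulVec_zero]
      simpa using hsupnn
    · set v : Fin n → ℝ := K *ᵥ w₀ with hv
      set t : ℝ := v ⬝ᵥ S *ᵥ v with ht
      have hvne : v ≠ 0 := by
        intro h
        apply hBw₀
        rw [← hBKv w₀, ← hv, h, mulVec_zero]
      have htpos : 0 < t := by
        have := hS.re_dotProduct_pos hvne
        simpa [ht] using this
      -- the LHS equals √t
      have hLHS : lam1 ⬝ᵥ M⁻¹ *ᵥ lam1 = t := by
        rw [hl]
        have hinv : M⁻¹ *ᵥ (M *ᵥ (B *ᵥ w₀)) = B *ᵥ w₀ := by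
          rw [mulVec_mulVec (B *ᵥ w₀) M⁻¹ M, nonsing_inv_mul M hMu, one_mulVec]
        rw [hinv, dotProduct_comm]
        exact hkey w₀ w₀
      -- each value of f is at most √t
      have hub : ∀ i, f i ≤ Real.sqrt t := by
        rintro ⟨w, hwW, hwB⟩
        set vw : Fin n → ℝ := K *ᵥ w with hvw
        have hvwne : vw ≠ 0 := by
          intro h
          apply hwB
          rw [← hBKv w, ← hvw, h, mulVec_zero]
        have hdpos : 0 < vw ⬝ᵥ S *ᵥ vw := by
          have := hS.re_dotProduct_pos hvwne
          simpa using this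
        have hnum : (B *ᵥ vw) ⬝ᵥ lam1 = vw ⬝ᵥ S *ᵥ v := by
          rw [hvw, hBKv w, hl]
          exact hkey w w₀
        have hcs : vw ⬝ᵥ S *ᵥ v ≤
            Real.sqrt (vw ⬝ᵥ S *ᵥ vw) * Real.sqrt t :=
          psd_cs_aux hS.posSemidef vw v
        show (B *ᵥ vw) ⬝ᵥ lam1 / Real.sqrt (vw ⬝ᵥ S *ᵥ vw) ≤ Real.sqrt t
        rw [div_le_iff₀ (Real.sqrt_pos.mpr hdpos), hnum]
        calc vw ⬝ᵥ S *ᵥ v ≤ Real.sqrt (vw ⬝ᵥ S *ᵥ vw) * Real.sqrt t := hcs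
          _ = Real.sqrt t * Real.sqrt (vw ⬝ᵥ S *ᵥ vw) := mul_comm _ _
      have hbdd : BddAbove (Set.range f) := ⟨Real.sqrt t, by rintro x ⟨i, rfl⟩; exact hub i⟩
      -- f attains √t at w₀
      have hval : f ⟨w₀, hw₀W, hBw₀⟩ = Real.sqrt t := by
        show (B *ᵥ (K *ᵥ w₀)) ⬝ᵥ lam1 / Real.sqrt ((K *ᵥ w₀) ⬝ᵥ S *ᵥ (K *ᵥ w₀)) =
          Real.sqrt t
        have hnum : (B *ᵥ (K *ᵥ w₀)) ⬝ᵥ lam1 = t := by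
          rw [hBKv w₀, hl]
          exact hkey w₀ w₀
        rw [hnum]
        exact Real.div_sqrt
      calc Real.sqrt (lam1 ⬝ᵥ M⁻¹ *ᵥ lam1) = Real.sqrt t := by rw [hLHS]
        _ = f ⟨w₀, hw₀W, hBw₀⟩ := hval.symm
        _ ≤ ⨆ i, f i := le_ciSup hbdd _
end

section
/- Let V₀, V₁ be subspaces of a normed space with projections Π_SZ : H → V₁ satisfying |Π_SZ u| ≤ c_S |u| and Σ_k H_k⁻² ‖(I−Π_SZ)u‖²_{L²(Ω_k)} ≤ c_S |u|², and Π_F̃ : H → V satisfying |Π_F̃ v|² ≤ c̃ Σ_k (H_k⁻²‖v‖²_{L²(Ω_k)} + |v|²_{H¹(Ω_k)}) and b((I−Π_F̃)v, p) = 0 for all p ∈ Q₁. Then Π := Π_SZ + Π_F̃(I−Π_SZ) satisfies |Πu|² ≤ (2c_S² + 2c̃(c_S + (1+c_S)²)) |u|² and b((I−Π)u, p) = 0 for all u ∈ H, p ∈ Q₁, where |·| denotes the H¹-seminorm and |u|² = Σ_k |u|²_{H¹(Ω_k)}. -/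
theorem stmt19 {H Q : Type*} [AddCommGroup H] [Module ℝ H]
    [AddCommGroup Q] [Module ℝ Q]
    {K : ℕ}
    (Jloc L2loc : Fin K → H → ℝ) (Hk : Fin K → ℝ) (hHk : ∀ k, 0 < Hk k)
    (hJnonneg : ∀ k u, 0 ≤ Jloc k u)
    (hL2nonneg : ∀ k u, 0 ≤ L2loc k u)
    (hJtri : ∀ u v : H,
        Real.sqrt (∑ k, (Jloc k (u + v)) ^ 2) ≤
          Real.sqrt (∑ k, (Jloc k u) ^ 2) + Real.sqrt (∑ k, (Jloc k v) ^ 2))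
    (hJneg : ∀ (k : Fin K) (u : H), Jloc k (-u) = Jloc k u)
    (PSZ PF : H →ₗ[ℝ] H) (b : H →ₗ[ℝ] Q →ₗ[ℝ] ℝ) (Q1 : Submodule ℝ Q)
    (cS ct : ℝ) (hcS : 0 ≤ cS) (hct : 0 ≤ ct)
    (hSZstab : ∀ u : H,
        Real.sqrt (∑ k, (Jloc k (PSZ u)) ^ 2) ≤ cS * Real.sqrt (∑ k, (Jloc k u) ^ 2))
    (hSZapprox : ∀ u : H,
        (∑ k, ((Hk k)⁻¹) ^ 2 * (L2loc k (u - PSZ u)) ^ 2) ≤ cS * ∑ k, (Jloc k u) ^ 2)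
    (hFstab : ∀ v : H,
        (∑ k, (Jloc k (PF v)) ^ 2) ≤
          ct * ∑ k, (((Hk k)⁻¹) ^ 2 * (L2loc k v) ^ 2 + (Jloc k v) ^ 2))
    (hForth : ∀ v : H, ∀ p ∈ Q1, b (v - PF v) p = 0) :
    ∀ u : H,
      (∑ k, (Jloc k (PSZ u + PF (u - PSZ u))) ^ 2) ≤
          (2 * cS ^ 2 + 2 * ct * (cS + (1 + cS) ^ 2)) * ∑ k, (Jloc k u) ^ 2 ∧
        ∀ p ∈ Q1, b (u - (PSZ u + PF (u - PSZ u))) p = 0 := by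
  intro u
  constructor
  · set A := ∑ k, (Jloc k u) ^ 2 with hAdef
    set X := ∑ k, (Jloc k (PSZ u)) ^ 2 with hXdef
    set Y := ∑ k, (Jloc k (PF (u - PSZ u))) ^ 2 with hYdef
    set D := ∑ k, (Jloc k (u - PSZ u)) ^ 2 with hDdef
    have hAnn : 0 ≤ A := Finset.sum_nonneg fun k _ => sq_nonneg _
    have hXnn : 0 ≤ X := Finset.sum_nonneg fun k _ => sq_nonneg _
    have hYnn : 0 ≤ Y := Finset.sum_nonneg fun k _ => sq_nonneg _
    have hDnn : 0 ≤ D := Finset.sum_nonneg fun k _ => sq_nonneg _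
    have hsA : Real.sqrt A ^ 2 = A := Real.sq_sqrt hAnn
    have hsX : Real.sqrt X ^ 2 = X := Real.sq_sqrt hXnn
    have hsY : Real.sqrt Y ^ 2 = Y := Real.sq_sqrt hYnn
    have hsD : Real.sqrt D ^ 2 = D := Real.sq_sqrt hDnn
    -- X ≤ cS^2 * A
    have hX : X ≤ cS ^ 2 * A := by
      have h := hSZstab u
      nlinarith [Real.sqrt_nonneg X, Real.sqrt_nonneg A]
    -- √D ≤ (1+cS) √A
    have hDsqrt : Real.sqrt D ≤ (1 + cS) * Real.sqrt A := by
      have h := hJtri u (-(PSZ u))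
      have h2 : (∑ k, (Jloc k (u + -(PSZ u))) ^ 2) = D := by
        rw [hDdef]
        congr 1; funext k; rw [sub_eq_add_neg]
      have h3 : (∑ k, (Jloc k (-(PSZ u))) ^ 2) = X := by
        rw [hXdef]; congr 1; funext k; rw [hJneg]
      rw [h2, h3] at h
      have := hSZstab u
      nlinarith [Real.sqrt_nonneg A]
    have hD : D ≤ (1 + cS) ^ 2 * A := by
      nlinarith [Real.sqrt_nonneg D, Real.sqrt_nonneg A]
    -- Y bound
    have hY : Y ≤ ct * (cS + (1 + cS) ^ 2) * A := by
      have h1 := hFstab (u - PSZ u)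
      have h2 := hSZapprox u
      rw [Finset.sum_add_distrib] at h1
      calc Y ≤ ct * ((∑ k, ((Hk k)⁻¹) ^ 2 * (L2loc k (u - PSZ u)) ^ 2) + D) := h1
        _ ≤ ct * (cS * A + (1 + cS) ^ 2 * A) := by
            apply mul_le_mul_of_nonneg_left _ hct
            exact add_le_add h2 hD
        _ = ct * (cS + (1 + cS) ^ 2) * A := by ring
    -- combine
    have htri := hJtri (PSZ u) (PF (u - PSZ u))
    have hSnn : 0 ≤ ∑ k, (Jloc k (PSZ u + PF (u - PSZ u))) ^ 2 :=
      Finset.sum_nonneg fun k _ => sq_nonneg _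
    have hsS : Real.sqrt (∑ k, (Jloc k (PSZ u + PF (u - PSZ u))) ^ 2) ^ 2 =
        ∑ k, (Jloc k (PSZ u + PF (u - PSZ u))) ^ 2 := Real.sq_sqrt hSnn
    nlinarith [Real.sqrt_nonneg (∑ k, (Jloc k (PSZ u + PF (u - PSZ u))) ^ 2),
      Real.sqrt_nonneg X, Real.sqrt_nonneg Y, sq_nonneg (Real.sqrt X - Real.sqrt Y)]
  · intro p hp
    have h := hForth (u - PSZ u) p hp
    have heq : u - (PSZ u + PF (u - PSZ u)) = (u - PSZ u) - PF (u - PSZ u) := by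
      abel
    rw [heq]
    exact h
end
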